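/- Density lower bound for FirmCores: let β > 0 be real, C a nonempty subset of V satisfying the (k,λ)-FirmCore property for integers k ≥ 0 and 1 ≤ λ ≤ |L|. Then ρ(C) ≥ (k / (2|L|)) · max over integers ξ with 0 ≤ ξ < λ of (λ − ξ)(ξ + 1)^β. -/
import Mathlib


open Finset

/-- Degree of `v` in the subgraph of layer `ℓ` induced by the vertex set `S`. -/
def degS {V L : Type*} (G : L → SimpleGraph V) [∀ ℓ, DecidableRel (G ℓ).Adj]
    (S : Finset V) (ℓ : L) (v : V) : ℕ :=
  (S.filter fun u => (G ℓ).Adj v u).card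

/-- `S` satisfies the `(k,λ)`-FirmCore property: every vertex of `S` has, in at least
`λ` layers, at least `k` neighbors inside `S`. -/
def FCProp {V L : Type*} [Fintype L] (G : L → SimpleGraph V)
    [∀ ℓ, DecidableRel (G ℓ).Adj] (k lam : ℕ) (S : Finset V) : Prop :=
  ∀ v ∈ S, lam ≤ (univ.filter fun ℓ : L => k ≤ degS G S ℓ v).card

/-- `C` is the `(k,λ)`-FirmCore: it satisfies the FirmCore property and is maximal
(under set inclusion) among such sets. -/
def IsFirmCore {V L : Type*} [Fintype L] (G : L → SimpleGraph V)
    [∀ ℓ, DecidableRel (G ℓ).Adj] (k lam : ℕ) (C : Finset V) : Prop :=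
  FCProp G k lam C ∧ ∀ S : Finset V, FCProp G k lam S → C ⊆ S → S = C


/-- Number of edges of the subgraph of layer `ℓ` induced by `S` (ordered pairs halved). -/
def edgeCount {V L : Type*} (G : L → SimpleGraph V) [∀ ℓ, DecidableRel (G ℓ).Adj]
    (ℓ : L) (S : Finset V) : ℕ :=
  ((S ×ˢ S).filter fun p : V × V => (G ℓ).Adj p.1 p.2).card / 2

/-- The multilayer density `ρ(S) = max_{∅ ≠ L̂ ⊆ L} (min_{ℓ ∈ L̂} |E_ℓ[S]|/|S|) · |L̂|^β`. -/
noncomputable def mlDensity {V L : Type*} (G : L → SimpleGraph V)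
    [∀ ℓ, DecidableRel (G ℓ).Adj] (β : ℝ) (S : Finset V) : ℝ :=
  sSup { x : ℝ | ∃ Lh : Finset L, Lh.Nonempty ∧
    x = sInf { y : ℝ | ∃ ℓ ∈ Lh, y = (edgeCount G ℓ S : ℝ) / (S.card : ℝ) } *
      (Lh.card : ℝ) ^ β }


lemma even_card_swap {α : Type*} [DecidableEq α] :
    ∀ s : Finset (α × α), (∀ p ∈ s, p.swap ∈ s) → (∀ p ∈ s, p.1 ≠ p.2) → Even s.card := by
  intro s
  induction s using Finset.strongInduction with
  | _ s ih =>
    intro hs hf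
    rcases s.eq_empty_or_nonempty with rfl | ⟨p, hp⟩
    · simp
    · have hps : p.swap ∈ s := hs p hp
      have hne : p.swap ≠ p := by
        intro hc
        exact hf p hp (by simpa using (congrArg Prod.fst hc).symm)
      set t := (s.erase p).erase p.swap with ht
      have htpss : t ⊂ s :=
        Finset.ssubset_of_subset_of_ssubset (Finset.erase_subset _ _) (Finset.erase_ssubset hp)
      have hcard : s.card = t.card + 2 := by
        have h1 : p.swap ∈ s.erase p := Finset.mem_erase.mpr ⟨hne, hps⟩
        have h2 : (s.erase p).card = t.card + 1 :=
          (Finset.card_erase_add_one h1).symm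
        have h3 : s.card = (s.erase p).card + 1 := (Finset.card_erase_add_one hp).symm
        omega
      have het : Even t.card := by
        refine ih t htpss ?_ ?_
        · intro q hq
          have hqs : q ∈ s := htpss.1 hq
          have h1 := hs q hqs
          simp only [ht, Finset.mem_erase] at hq ⊢
          refine ⟨?_, ?_, h1⟩
          · intro hc; exact hq.2.1 (by rw [← Prod.swap_swap q, hc, Prod.swap_swap])
          · intro hc; exact hq.1 (by rw [← Prod.swap_swap q, hc])
        · intro q hq; exact hf q (htpss.1 hq)
      rw [hcard]
      exact het.add (Even.add_self 1)

def degS' {V L : Type*} (G : L → SimpleGraph V) [∀ ℓ, DecidableRel (G ℓ).Adj]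
    (S : Finset V) (ℓ : L) (v : V) : ℕ :=
  (S.filter fun u => (G ℓ).Adj v u).card

def edgeCount' {V L : Type*} (G : L → SimpleGraph V) [∀ ℓ, DecidableRel (G ℓ).Adj]
    (ℓ : L) (S : Finset V) : ℕ :=
  ((S ×ˢ S).filter fun p : V × V => (G ℓ).Adj p.1 p.2).card / 2

lemma two_mul_edgeCount' {V L : Type*} (G : L → SimpleGraph V) [∀ ℓ, DecidableRel (G ℓ).Adj]
    (ℓ : L) (S : Finset V) [DecidableEq V] :
    2 * edgeCount' G ℓ S = ((S ×ˢ S).filter fun p : V × V => (G ℓ).Adj p.1 p.2).card := by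
  have hev : Even ((S ×ˢ S).filter fun p : V × V => (G ℓ).Adj p.1 p.2).card := by
    apply even_card_swap
    · intro p hp
      simp only [Finset.mem_filter, Finset.mem_product] at hp ⊢
      exact ⟨⟨hp.1.2, hp.1.1⟩, hp.2.symm⟩
    · intro p hp
      simp only [Finset.mem_filter] at hp
      exact hp.2.ne
  obtain ⟨m, hm⟩ := hev
  rw [edgeCount', hm]; omega

lemma card_pairs_eq_sum {V L : Type*} (G : L → SimpleGraph V) [∀ ℓ, DecidableRel (G ℓ).Adj]
    (ℓ : L) (S : Finset V) :
    ((S ×ˢ S).filter fun p : V × V => (G ℓ).Adj p.1 p.2).card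
      = ∑ v ∈ S, degS' G S ℓ v := by
  rw [Finset.card_filter, Finset.sum_product]
  refine Finset.sum_congr rfl fun v _ => ?_
  rw [degS', Finset.card_filter]

/-- Density lower bound for FirmCores (Lemma 1):
`ρ(C) ≥ (k / 2|L|) · max_{0 ≤ ξ < λ} (λ - ξ)(ξ+1)^β`. -/
theorem firmcore_density_lb {V L : Type*} [Fintype L] (G : L → SimpleGraph V)
    [∀ ℓ, DecidableRel (G ℓ).Adj] (β : ℝ) (hβ : 0 < β)
    (k lam : ℕ) (hlam : 1 ≤ lam) (hlamL : lam ≤ Fintype.card L)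
    (C : Finset V) (hC : C.Nonempty) (h : FCProp G k lam C) :
    (k : ℝ) / (2 * (Fintype.card L : ℝ)) *
      ((Finset.range lam).sup' (Finset.nonempty_range_iff.mpr (by omega))
        fun ξ : ℕ => ((lam : ℝ) - (ξ : ℝ)) * ((ξ : ℝ) + 1) ^ β) ≤
    mlDensity G β C := by
  classical
  set cL := Fintype.card L with hcL
  set c := C.card with hc
  have hc1 : 1 ≤ c := hC.card_pos
  have hcL1 : 1 ≤ cL := le_trans hlam hlamL
  have hcpos : (0:ℝ) < (c:ℝ) := by exact_mod_cast hc1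
  have hcLpos : (0:ℝ) < (cL:ℝ) := by exact_mod_cast hcL1
  set n : L → ℕ := fun ℓ => (C.filter fun v => k ≤ degS G C ℓ v).card with hn
  -- double counting
  have hdouble : lam * c ≤ ∑ ℓ : L, n ℓ := by
    have hswap : ∑ ℓ : L, n ℓ
        = ∑ v ∈ C, (univ.filter fun ℓ : L => k ≤ degS G C ℓ v).card := by
      simp_rw [hn, Finset.card_filter]
      exact Finset.sum_comm
    rw [hswap]
    calc lam * c = ∑ _v ∈ C, lam := by rw [Finset.sum_const, smul_eq_mul, mul_comm]
    _ ≤ _ := Finset.sum_le_sum fun v hv => h v hv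
  -- edge count bound per layer
  have hedge : ∀ ℓ : L, k * n ℓ ≤ 2 * edgeCount G ℓ C := by
    intro ℓ
    have h2 : (2 : ℕ) * edgeCount G ℓ C
        = ((C ×ˢ C).filter fun p : V × V => (G ℓ).Adj p.1 p.2).card :=
      two_mul_edgeCount' G ℓ C
    have h3 : ((C ×ˢ C).filter fun p : V × V => (G ℓ).Adj p.1 p.2).card
        = ∑ v ∈ C, degS G C ℓ v := card_pairs_eq_sum G ℓ C
    have h4 : k * n ℓ ≤ ∑ v ∈ C, degS G C ℓ v := by
      calc k * n ℓ = ∑ _v ∈ (C.filter fun v => k ≤ degS G C ℓ v), k := by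
            rw [Finset.sum_const, smul_eq_mul, mul_comm]
      _ ≤ ∑ v ∈ (C.filter fun v => k ≤ degS G C ℓ v), degS G C ℓ v :=
            Finset.sum_le_sum fun v hv => (Finset.mem_filter.mp hv).2
      _ ≤ ∑ v ∈ C, degS G C ℓ v :=
            Finset.sum_le_sum_of_subset (Finset.filter_subset _ _)
    omega
  -- the sup' is attained
  obtain ⟨ξ, hξmem, hξeq⟩ := Finset.exists_mem_eq_sup' (Finset.nonempty_range_iff.mpr
    (by omega : lam ≠ 0)) (fun ξ : ℕ => ((lam : ℝ) - (ξ : ℝ)) * ((ξ : ℝ) + 1) ^ β)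
  rw [hξeq]
  have hξlt : ξ < lam := Finset.mem_range.mp hξmem
  set m := lam - ξ with hm
  have hmeq : ξ + m = lam := by omega
  have hm1 : 1 ≤ m := by omega
  -- many layers have large n
  set T : Finset L := univ.filter (fun ℓ => m * c ≤ cL * n ℓ) with hT
  have hTcard : ξ + 1 ≤ T.card := by
    by_contra hcon
    push_neg at hcon
    have hTle : T.card ≤ ξ := by omega
    set NT : Finset L := univ.filter (fun ℓ => ¬ (m * c ≤ cL * n ℓ)) with hNT
    have hcards : T.card + NT.card = cL := by
      rw [hT, hNT, Finset.card_filter_add_card_filter_not, Finset.card_univ]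
    have hNT1 : 1 ≤ NT.card := by omega
    have hsplit : ∑ ℓ : L, cL * n ℓ = ∑ ℓ ∈ T, cL * n ℓ + ∑ ℓ ∈ NT, cL * n ℓ := by
      rw [hT, hNT]
      exact (Finset.sum_filter_add_sum_filter_not univ _ _).symm
    have hTsum : ∑ ℓ ∈ T, cL * n ℓ ≤ ξ * (cL * c) := by
      calc ∑ ℓ ∈ T, cL * n ℓ ≤ T.card * (cL * c) := by
            apply Finset.sum_le_card_nsmul
            intro ℓ _
            exact Nat.mul_le_mul_left cL (Finset.card_filter_le _ _)
      _ ≤ ξ * (cL * c) := Nat.mul_le_mul_right _ hTle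
    have hNTsum : ∑ ℓ ∈ NT, cL * n ℓ + NT.card ≤ cL * (m * c) := by
      have : ∑ ℓ ∈ NT, (cL * n ℓ + 1) ≤ NT.card * (m * c) := by
        apply Finset.sum_le_card_nsmul
        intro ℓ hℓ
        have := (Finset.mem_filter.mp hℓ).2
        omega
      rw [Finset.sum_add_distrib, Finset.sum_const, smul_eq_mul, mul_one] at this
      calc ∑ ℓ ∈ NT, cL * n ℓ + NT.card ≤ NT.card * (m * c) := this
      _ ≤ cL * (m * c) := Nat.mul_le_mul_right _ (by omega)
    have hbig : cL * (lam * c) ≤ ∑ ℓ : L, cL * n ℓ := by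
      rw [← Finset.mul_sum]
      exact Nat.mul_le_mul_left cL hdouble
    have hkey : cL * (lam * c) + NT.card ≤ ξ * (cL * c) + cL * (m * c) := by omega
    have heqn : ξ * (cL * c) + cL * (m * c) = cL * (lam * c) := by
      rw [← hmeq]; ring
    omega
  obtain ⟨Lh, hLhT, hLhcard⟩ := Finset.exists_subset_card_eq hTcard
  have hLhne : Lh.Nonempty := by
    rw [← Finset.card_pos, hLhcard]; omega
  -- real-valued bound on each layer in Lh
  have hB : ∀ ℓ ∈ Lh, (k : ℝ) * (m : ℝ) / (2 * (cL:ℝ)) ≤ (edgeCount G ℓ C : ℝ) / (c : ℝ) := by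
    intro ℓ hℓ
    have hℓT : ℓ ∈ T := hLhT hℓ
    have h1 : m * c ≤ cL * n ℓ := (Finset.mem_filter.mp hℓT).2
    have h2 : k * n ℓ ≤ 2 * edgeCount G ℓ C := hedge ℓ
    have hnat : k * (m * c) ≤ cL * (2 * edgeCount G ℓ C) := by
      calc k * (m * c) ≤ k * (cL * n ℓ) := Nat.mul_le_mul_left k h1
      _ = cL * (k * n ℓ) := by ring
      _ ≤ cL * (2 * edgeCount G ℓ C) := Nat.mul_le_mul_left cL h2
    rw [div_le_div_iff₀ (by positivity) hcpos]
    have hcast : (k : ℝ) * ((m:ℝ) * (c:ℝ)) ≤ (cL:ℝ) * (2 * (edgeCount G ℓ C : ℝ)) := by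
      exact_mod_cast hnat
    nlinarith [hcast]
  -- the candidate element of the sup set
  set Y : Set ℝ := { y : ℝ | ∃ ℓ ∈ Lh, y = (edgeCount G ℓ C : ℝ) / (c : ℝ) } with hY
  have hYne : Y.Nonempty := by
    obtain ⟨ℓ0, hℓ0⟩ := hLhne
    exact ⟨_, ℓ0, hℓ0, rfl⟩
  have hYlb : (k : ℝ) * (m : ℝ) / (2 * (cL:ℝ)) ≤ sInf Y := by
    apply le_csInf hYne
    rintro y ⟨ℓ, hℓ, rfl⟩
    exact hB ℓ hℓ
  set D : Set ℝ := { x : ℝ | ∃ Lh' : Finset L, Lh'.Nonempty ∧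
    x = sInf { y : ℝ | ∃ ℓ ∈ Lh', y = (edgeCount G ℓ C : ℝ) / (C.card : ℝ) } *
      (Lh'.card : ℝ) ^ β } with hD
  have hmemD : sInf Y * ((Lh.card : ℝ)) ^ β ∈ D := ⟨Lh, hLhne, rfl⟩
  -- bounded above
  have hLune : (univ : Finset L).Nonempty := by
    rw [← Finset.card_pos, Finset.card_univ]; omega
  set B0 : ℝ := ((univ : Finset L).sup' hLune fun ℓ => (edgeCount G ℓ C : ℝ) / (c : ℝ)) ⊔ 0
    with hB0
  have hB0nn : 0 ≤ B0 := le_sup_right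
  have hbdd : BddAbove D := by
    refine ⟨B0 * (cL : ℝ) ^ β, ?_⟩
    rintro x ⟨Lh', hLh', rfl⟩
    set Y' := { y : ℝ | ∃ ℓ ∈ Lh', y = (edgeCount G ℓ C : ℝ) / (C.card : ℝ) }
    have hY'nn : ∀ y ∈ Y', (0:ℝ) ≤ y := by
      rintro y ⟨ℓ, hℓ, rfl⟩; positivity
    have hInfnn : 0 ≤ sInf Y' := Real.sInf_nonneg hY'nn
    obtain ⟨ℓ0, hℓ0⟩ := hLh'
    have hInfle : sInf Y' ≤ B0 := by
      have hmem : (edgeCount G ℓ0 C : ℝ) / (C.card : ℝ) ∈ Y' := ⟨ℓ0, hℓ0, rfl⟩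
      have h1 : sInf Y' ≤ (edgeCount G ℓ0 C : ℝ) / (C.card : ℝ) :=
        csInf_le ⟨0, hY'nn⟩ hmem
      refine h1.trans (le_trans ?_ le_sup_left)
      exact Finset.le_sup' (fun ℓ => (edgeCount G ℓ C : ℝ) / (c : ℝ)) (Finset.mem_univ ℓ0)
    have hcardle : (Lh'.card : ℝ) ≤ (cL : ℝ) := by
      exact_mod_cast (Finset.card_le_univ Lh').trans_eq (Finset.card_univ)
    have hrle : (Lh'.card : ℝ) ^ β ≤ (cL : ℝ) ^ β :=
      Real.rpow_le_rpow (Nat.cast_nonneg _) hcardle hβ.le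
    exact mul_le_mul hInfle hrle (Real.rpow_nonneg (Nat.cast_nonneg _) β) hB0nn
  have hle : sInf Y * ((Lh.card : ℝ)) ^ β ≤ mlDensity G β C := by
    rw [mlDensity]
    exact le_csSup hbdd hmemD
  refine le_trans ?_ hle
  rw [hLhcard]
  have hrw : ((lam:ℝ) - (ξ:ℝ)) = (m : ℝ) := by
    have : (lam : ℝ) = (ξ : ℝ) + (m : ℝ) := by exact_mod_cast congrArg (Nat.cast : ℕ → ℝ) hmeq.symm
    linarith
  rw [hrw]
  have hcast2 : ((ξ + 1 : ℕ) : ℝ) = (ξ : ℝ) + 1 := by push_cast; ring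
  rw [hcast2]
  have hpow : (0:ℝ) ≤ ((ξ:ℝ) + 1) ^ β := Real.rpow_nonneg (by positivity) β
  calc (k : ℝ) / (2 * (cL : ℝ)) * ((m:ℝ) * ((ξ:ℝ) + 1) ^ β)
      = ((k:ℝ) * (m:ℝ) / (2 * (cL:ℝ))) * ((ξ:ℝ) + 1) ^ β := by ring
  _ ≤ sInf Y * ((ξ:ℝ) + 1) ^ β := mul_le_mul_of_nonneg_right hYlb hpow
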